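/- arXiv:2112.06860 — 2 statements merged into one kernel-verified Lean document; each statement's English description precedes it below -/
import Mathlib

section
/- Let t₁, t₂, s₁, s₂ ∈ ℂ with Re(s₁ + t₁) > 0, Re(s₁ + t₂) > 0, and Re(s₂ + t₁ + t₂) > 0. Then the triple integral ∫_{ℝˣ}∫_{ℝˣ}∫_{ℝˣ} |a₁|^{s₁+t₁} · |a₂|^{s₂−s₁+t₁} · |c|^{t₂−t₁} · exp(−π a₂² − π c²/a₂² − π a₁²/c²) d×c d×a₁ d×a₂ converges absolutely and equals ζ_ℝ(s₁ + t₁) · ζ_ℝ(s₁ + t₂) · ζ_ℝ(s₂ + t₁ + t₂). (This is the base case n = 2, F = ℝ of the paper's theorem that the Bump–Friedberg integral of the spherical Whittaker function equals L(s₁, π)·L(s₂, π, ∧²), made fully explicit for π = |·|^{t₁} ⊞ |·|^{t₂} via the paper's propagation formula.) -/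
open MeasureTheory

/-- The real zeta factor `ζ_ℝ(s) = π^{-s/2} Γ(s/2)`. -/
noncomputable def zetaR (s : ℂ) : ℂ :=
  (Real.pi : ℂ) ^ (-s / 2) * Complex.Gamma (s / 2)

/-- The complex zeta factor `ζ_ℂ(s) = 2 (2π)^{-s} Γ(s)`. -/
noncomputable def zetaC (s : ℂ) : ℂ :=
  2 * (2 * (Real.pi : ℂ)) ^ (-s) * Complex.Gamma s

/-- The multiplicative Haar measure `d×x = dx/|x|` on `ℝˣ = ℝ ∖ {0}`. -/
noncomputable def mulHaarR : Measure ℝ :=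
  volume.withDensity fun x => ENNReal.ofReal (1 / |x|)

/-- The multiplicative Haar measure `d×z = (2/π) dA(z)/|z|²` on `ℂˣ`. -/
noncomputable def mulHaarC : Measure ℂ :=
  volume.withDensity fun z => ENNReal.ofReal (2 / (Real.pi * ‖z‖ ^ 2))

/-- The complex power `|x|^w = exp(w log |x|)` for `x ∈ ℝ`. -/
noncomputable def cpowR (x : ℝ) (w : ℂ) : ℂ :=
  Complex.exp (w * (Real.log |x| : ℂ))

/-- The complex power `|z|_ℂ^w = exp(w log |z|²)` for `z ∈ ℂ`. -/
noncomputable def cpowC (z : ℂ) (w : ℂ) : ℂ :=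
  Complex.exp (w * (Real.log (‖z‖ ^ 2) : ℂ))

/-- The integrand of the `n = 2`, `F = ℝ` Bump–Friedberg integral, in the variables
`p = (a₁, a₂, c)`:
`|a₁|^{s₁+t₁} |a₂|^{s₂-s₁+t₁} |c|^{t₂-t₁} exp(-π a₂² - π c²/a₂² - π a₁²/c²)`. -/
noncomputable def bfIntegrandR2 (s₁ s₂ t₁ t₂ : ℂ) (p : ℝ × ℝ × ℝ) : ℂ :=
  cpowR p.1 (s₁ + t₁) * cpowR p.2.1 (s₂ - s₁ + t₁) * cpowR p.2.2 (t₂ - t₁) *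
    (Real.exp (-Real.pi * p.2.1 ^ 2 - Real.pi * (p.2.2 ^ 2 / p.2.1 ^ 2)
      - Real.pi * (p.1 ^ 2 / p.2.2 ^ 2)) : ℂ)

lemma map_withDensity_equiv {α : Type*} [MeasurableSpace α] (e : α ≃ᵐ α) (μ : Measure α)
    (d : α → ENNReal) (hd : Measurable d) :
    Measure.map e (μ.withDensity d) = (Measure.map e μ).withDensity (fun y => d (e.symm y)) := by
  ext s hs
  rw [MeasurableEquiv.map_apply, withDensity_apply _ (e.measurable hs),
    withDensity_apply _ hs]
  have h := setLIntegral_map (μ := μ) hs (hd.comp e.symm.measurable) e.measurable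
  simp only [Function.comp] at h
  rw [h]
  simp

lemma mulHaarR_map_mul {a : ℝ} (ha : a ≠ 0) :
    MeasurePreserving (fun x : ℝ => a * x) mulHaarR mulHaarR := by
  refine ⟨measurable_const_mul a, ?_⟩
  have hd : Measurable (fun x : ℝ => ENNReal.ofReal (1 / |x|)) :=
    (measurable_const.div measurable_abs).ennreal_ofReal
  have he : (fun x : ℝ => a * x) = ⇑(MeasurableEquiv.mulLeft₀ a ha) := by
    ext x; simp
  rw [mulHaarR, he, map_withDensity_equiv _ _ _ hd]
  have hsymm : ∀ y : ℝ, (MeasurableEquiv.mulLeft₀ a ha).symm y = a⁻¹ * y := by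
    intro y; simp [MeasurableEquiv.mulLeft₀]
  have hmap : Measure.map (⇑(MeasurableEquiv.mulLeft₀ a ha)) (volume : Measure ℝ)
      = ENNReal.ofReal |a⁻¹| • volume := by
    rw [← Real.map_volume_mul_left ha]; rfl
  rw [hmap]
  have hdens : (fun y : ℝ => ENNReal.ofReal (1 / |(MeasurableEquiv.mulLeft₀ a ha).symm y|))
      = fun y => ENNReal.ofReal |a| * ENNReal.ofReal (1 / |y|) := by
    funext y
    rw [hsymm, ← ENNReal.ofReal_mul (abs_nonneg a)]
    congr 1
    rw [abs_mul, abs_inv]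
    rcases eq_or_ne y 0 with rfl | hy
    · simp
    · field_simp
  have hdens2 : (fun y : ℝ => ENNReal.ofReal |a| * ENNReal.ofReal (1 / |y|))
      = ENNReal.ofReal |a| • (fun y : ℝ => ENNReal.ofReal (1 / |y|)) := rfl
  rw [hdens, withDensity_smul_measure, hdens2, withDensity_smul _ hd, smul_smul,
      ← ENNReal.ofReal_mul (abs_nonneg a⁻¹), abs_inv, inv_mul_cancel₀ (abs_ne_zero.mpr ha)]
  simp [mulHaarR]

noncomputable def gker (s : ℂ) (x : ℝ) : ℂ :=
  cpowR x s * (Real.exp (-Real.pi * x ^ 2) : ℂ)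

lemma measurable_cpowR (w : ℂ) : Measurable fun x : ℝ => cpowR x w :=
  Complex.measurable_exp.comp (measurable_const.mul
    (Complex.measurable_ofReal.comp (Real.measurable_log.comp measurable_abs)))

lemma measurable_gker (s : ℂ) : Measurable (gker s) :=
  (measurable_cpowR s).mul (Complex.measurable_ofReal.comp
    (Real.measurable_exp.comp (measurable_const.mul (measurable_id.pow_const 2))))

lemma norm_cpowR {x : ℝ} (hx : x ≠ 0) (w : ℂ) : ‖cpowR x w‖ = |x| ^ w.re := by
  rw [cpowR, Complex.norm_exp, Real.rpow_def_of_pos (abs_pos.mpr hx)]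
  congr 1
  simp [Complex.mul_re]
  ring

lemma norm_gker {x : ℝ} (hx : x ≠ 0) (s : ℂ) :
    ‖gker s x‖ = |x| ^ s.re * Real.exp (-Real.pi * x ^ 2) := by
  rw [gker, norm_mul, norm_cpowR hx, Complex.norm_real, Real.norm_eq_abs,
    abs_of_pos (Real.exp_pos _)]

/-- transfer to a density integral -/
lemma integrable_mulHaarR_iff (g : ℝ → ℂ) :
    Integrable g mulHaarR ↔ Integrable (fun x => (1 / |x|) • g x) volume := by
  have hf : Measurable (fun x : ℝ => (1 / |x|).toNNReal) :=
    (measurable_const.div measurable_abs).real_toNNReal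
  have h0 : mulHaarR = volume.withDensity fun x => (((1 / |x|).toNNReal : NNReal) : ENNReal) := rfl
  have h1 := integrable_withDensity_iff_integrable_smul (μ := volume)
    (f := fun x : ℝ => (1 / |x|).toNNReal) hf (g := g)
  rw [h0, h1]
  apply integrable_congr
  refine Filter.Eventually.of_forall fun x => ?_
  simp only [NNReal.smul_def, Real.coe_toNNReal _ (by positivity : (0:ℝ) ≤ 1 / |x|)]

lemma integral_mulHaarR (g : ℝ → ℂ) :
    ∫ x, g x ∂mulHaarR = ∫ x, (1 / |x|) • g x := by
  have hf : Measurable (fun x : ℝ => (1 / |x|).toNNReal) :=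
    (measurable_const.div measurable_abs).real_toNNReal
  have h0 : mulHaarR = volume.withDensity fun x => (((1 / |x|).toNNReal : NNReal) : ENNReal) := rfl
  have h1 := integral_withDensity_eq_integral_smul (μ := volume)
    (f := fun x : ℝ => (1 / |x|).toNNReal) hf g
  rw [h0, h1]
  congr 1
  funext x
  simp only [NNReal.smul_def, Real.coe_toNNReal _ (by positivity : (0:ℝ) ≤ 1 / |x|)]

lemma mellin_exp (s : ℂ) (hs : 0 < s.re) :
    mellin (fun t => ((Real.exp (-Real.pi * t) : ℝ) : ℂ)) (s / 2) = Complex.Gammaℝ s := by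
  have hF : ∀ t ∈ Set.Ioi (0 : ℝ), HasSum
      (fun _ : Unit => if (1 : ℝ) = 0 then 0 else (1 : ℂ) * (Real.exp (-Real.pi * 1 ^ 2 * t) : ℝ))
      ((Real.exp (-Real.pi * t) : ℝ) : ℂ) := by
    intro t _
    simpa using hasSum_fintype (f := fun _ : Unit => ((Real.exp (-Real.pi * t) : ℝ) : ℂ))
  have h_sum : Summable (fun _ : Unit => ‖(1 : ℂ)‖ / |(1 : ℝ)| ^ s.re) :=
    (hasSum_fintype _).summable
  have H := hasSum_mellin_pi_mul_sq (a := fun _ : Unit => (1 : ℂ))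
    (r := fun _ : Unit => (1 : ℝ)) hs hF h_sum
  have H2 := (hasSum_fintype
    (fun _ : Unit => Complex.Gammaℝ s * 1 / (Complex.ofReal |(1 : ℝ)|) ^ s)).unique H
  simpa using H2.symm

lemma setIntegral_Ioi_gker (s : ℂ) (hs : 0 < s.re) :
    ∫ x in Set.Ioi (0 : ℝ), (1 / |x|) • gker s x = ((2 : ℝ)⁻¹ : ℂ) * Complex.Gammaℝ s := by
  have hcongr : ∫ x in Set.Ioi (0 : ℝ), (1 / |x|) • gker s x
      = mellin (fun t => ((Real.exp (-Real.pi * t ^ (2 : ℝ)) : ℝ) : ℂ)) s := by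
    rw [mellin]
    refine setIntegral_congr_fun measurableSet_Ioi fun x hx => ?_
    have hx0 : (0 : ℝ) < x := hx
    have hxc : (x : ℂ) ≠ 0 := Complex.ofReal_ne_zero.mpr hx0.ne'
    rw [gker, cpowR, abs_of_pos hx0, Complex.real_smul, smul_eq_mul,
      Complex.cpow_def_of_ne_zero hxc, ← Complex.ofReal_log hx0.le,
      Real.rpow_two, mul_comm ((Real.log x : ℂ)) (s - 1), sub_mul, one_mul,
      Complex.exp_sub, ← Complex.ofReal_exp, Real.exp_log hx0]
    push_cast
    field_simp
  rw [hcongr]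
  have h2 := mellin_comp_rpow (E := ℂ)
    (fun t => ((Real.exp (-Real.pi * t) : ℝ) : ℂ)) s (2 : ℝ)
  rw [show ((2:ℝ):ℂ) = (2:ℂ) from by norm_num] at h2
  rw [h2, mellin_exp s hs, Complex.real_smul]
  norm_num

lemma phi_bound (s : ℂ) (x : ℝ) :
    ‖(1 / |x|) • gker s x‖ ≤ |x| ^ (s.re - 1) * Real.exp (-Real.pi * x ^ 2) := by
  rcases eq_or_ne x 0 with rfl | hx
  · simp only [abs_zero, div_zero, zero_smul, norm_zero]
    positivity
  · rw [norm_smul, Real.norm_eq_abs, abs_of_nonneg (by positivity : (0:ℝ) ≤ 1 / |x|),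
      norm_gker hx, Real.rpow_sub (abs_pos.mpr hx), Real.rpow_one]
    rw [div_mul_eq_mul_div, one_mul, mul_comm (|x| ^ s.re) _, mul_div_assoc]
    rw [mul_comm]

lemma bound_integrable (s : ℂ) (hs : 0 < s.re) :
    Integrable (fun x : ℝ => |x| ^ (s.re - 1) * Real.exp (-Real.pi * x ^ 2)) volume := by
  set g : ℝ → ℝ := fun x => |x| ^ (s.re - 1) * Real.exp (-Real.pi * x ^ 2) with hg
  have h1 : IntegrableOn g (Set.Ioi (0 : ℝ)) := by
    have := integrableOn_rpow_mul_exp_neg_mul_sq Real.pi_pos (by linarith : (-1:ℝ) < s.re - 1)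
    refine this.congr_fun (fun x hx => ?_) measurableSet_Ioi
    rw [hg]
    simp only [abs_of_pos (show (0:ℝ) < x from hx)]
  have h2 : IntegrableOn g (Set.Iic (0 : ℝ)) := by
    have A : MeasurableEmbedding fun x : ℝ => -x := (Homeomorph.neg ℝ).measurableEmbedding
    rw [show (volume : Measure ℝ) = Measure.map Neg.neg volume from
      (Measure.map_neg_eq_self (volume : Measure ℝ)).symm, IntegrableOn,
      Measure.restrict_map A.measurable measurableSet_Iic]
    rw [A.integrable_map_iff]
    have hcomp : g ∘ Neg.neg = g := by
      funext x
      simp only [Function.comp, hg, abs_neg, neg_sq]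
    rw [hcomp]
    have hset : (Neg.neg ⁻¹' Set.Iic (0:ℝ)) = Set.Ici (0:ℝ) := by
      ext x; simp
    rw [hset]
    exact (integrableOn_Ici_iff_integrableOn_Ioi).mpr h1
  have := h2.union h1
  rwa [Set.Iic_union_Ioi, integrableOn_univ] at this

lemma phi_integrable (s : ℂ) (hs : 0 < s.re) :
    Integrable (fun x : ℝ => (1 / |x|) • gker s x) volume := by
  refine (bound_integrable s hs).mono' ?_ (Filter.Eventually.of_forall (phi_bound s))
  exact ((measurable_const.div measurable_abs).smul (measurable_gker s)).aestronglyMeasurable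

lemma gker_key (s : ℂ) (hs : 0 < s.re) :
    Integrable (gker s) mulHaarR ∧ ∫ x, gker s x ∂mulHaarR = Complex.Gammaℝ s := by
  have hint : Integrable (fun x : ℝ => (1 / |x|) • gker s x) volume := phi_integrable s hs
  refine ⟨(integrable_mulHaarR_iff (gker s)).mpr hint, ?_⟩
  rw [integral_mulHaarR]
  set φ : ℝ → ℂ := fun x => (1 / |x|) • gker s x with hφ
  have heven : ∀ x, φ (-x) = φ x := by
    intro x
    simp only [hφ, gker, cpowR, abs_neg, neg_sq]
  have hsplit : ∫ x, φ x = (∫ x in Set.Iic (0:ℝ), φ x) + ∫ x in Set.Ioi (0:ℝ), φ x := by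
    rw [← setIntegral_union (Set.Iic_disjoint_Ioi le_rfl) measurableSet_Ioi
      hint.integrableOn hint.integrableOn, Set.Iic_union_Ioi, Measure.restrict_univ]
  have hIic : ∫ x in Set.Iic (0:ℝ), φ x = ∫ x in Set.Ioi (0:ℝ), φ x := by
    rw [show (∫ x in Set.Iic (0:ℝ), φ x) = ∫ x in Set.Iic (0:ℝ), φ (-x) from
      (setIntegral_congr_fun measurableSet_Iic fun x _ => (heven x).symm)]
    rw [integral_comp_neg_Iic, neg_zero]
  rw [hsplit, hIic, setIntegral_Ioi_gker s hs]
  push_cast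
  ring

open Set

instance : SigmaFinite mulHaarR := SigmaFinite.withDensity_ofReal (fun x => 1 / |x|)

lemma mulHaarR_singleton_zero : mulHaarR ({0} : Set ℝ) = 0 :=
  withDensity_absolutelyContinuous volume _ (by simp)

lemma ae_ne_zero : ∀ᵐ x ∂mulHaarR, x ≠ 0 := by
  rw [ae_iff]
  have h : {x : ℝ | ¬ x ≠ 0} = ({0} : Set ℝ) := by ext x; simp
  rw [h]
  exact mulHaarR_singleton_zero

lemma ae_snd_ne_zero : ∀ᵐ q : ℝ × ℝ ∂(mulHaarR.prod mulHaarR), q.2 ≠ 0 := by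
  rw [ae_iff]
  have h : {q : ℝ × ℝ | ¬ q.2 ≠ 0} = (Set.univ : Set ℝ) ×ˢ ({0} : Set ℝ) := by
    ext ⟨x, y⟩; simp [eq_comm]
  rw [h, Measure.prod_prod, mulHaarR_singleton_zero, mul_zero]

lemma measurePreserving_Psi :
    MeasurePreserving (fun q : ℝ × ℝ => (q.1, q.1⁻¹ * q.2))
      (mulHaarR.prod mulHaarR) (mulHaarR.prod mulHaarR) := by
  refine MeasurePreserving.skew_product (g := fun a c => a⁻¹ * c)
    (MeasurePreserving.id mulHaarR) (measurable_fst.inv.mul measurable_snd) ?_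
  filter_upwards [ae_ne_zero] with a ha
  exact (mulHaarR_map_mul (inv_ne_zero ha)).map_eq

lemma measurePreserving_T :
    MeasurePreserving (fun q : (ℝ × ℝ) × ℝ => (q.1, q.1.2⁻¹ * q.2))
      ((mulHaarR.prod mulHaarR).prod mulHaarR) ((mulHaarR.prod mulHaarR).prod mulHaarR) := by
  refine MeasurePreserving.skew_product (g := fun (q : ℝ × ℝ) (a : ℝ) => q.2⁻¹ * a)
    (MeasurePreserving.id (mulHaarR.prod mulHaarR))
    ((measurable_fst.snd.inv).mul measurable_snd) ?_
  filter_upwards [ae_snd_ne_zero] with q hq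
  exact (mulHaarR_map_mul (inv_ne_zero hq)).map_eq

lemma measurePreserving_Phi :
    MeasurePreserving (fun p : ℝ × ℝ × ℝ => (p.2.2⁻¹ * p.1, (p.2.1, p.2.1⁻¹ * p.2.2)))
      (mulHaarR.prod (mulHaarR.prod mulHaarR)) (mulHaarR.prod (mulHaarR.prod mulHaarR)) := by
  have h1 : MeasurePreserving (fun p : ℝ × ℝ × ℝ => (p.2.2⁻¹ * p.1, p.2))
      (mulHaarR.prod (mulHaarR.prod mulHaarR)) (mulHaarR.prod (mulHaarR.prod mulHaarR)) := by
    have hsw1 : MeasurePreserving (Prod.swap : ℝ × (ℝ × ℝ) → (ℝ × ℝ) × ℝ)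
        (mulHaarR.prod (mulHaarR.prod mulHaarR)) ((mulHaarR.prod mulHaarR).prod mulHaarR) :=
      Measure.measurePreserving_swap
    have hsw2 : MeasurePreserving (Prod.swap : (ℝ × ℝ) × ℝ → ℝ × (ℝ × ℝ))
        ((mulHaarR.prod mulHaarR).prod mulHaarR) (mulHaarR.prod (mulHaarR.prod mulHaarR)) :=
      Measure.measurePreserving_swap
    exact (hsw2.comp measurePreserving_T).comp hsw1
  have h2 : MeasurePreserving
      (Prod.map (id : ℝ → ℝ) (fun q : ℝ × ℝ => (q.1, q.1⁻¹ * q.2)))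
      (mulHaarR.prod (mulHaarR.prod mulHaarR)) (mulHaarR.prod (mulHaarR.prod mulHaarR)) :=
    (MeasurePreserving.id mulHaarR).prod measurePreserving_Psi
  exact h2.comp h1

lemma ae_triple : ∀ᵐ p : ℝ × ℝ × ℝ ∂(mulHaarR.prod (mulHaarR.prod mulHaarR)),
    p.1 ≠ 0 ∧ p.2.1 ≠ 0 ∧ p.2.2 ≠ 0 := by
  have e1 : ∀ᵐ p : ℝ × ℝ × ℝ ∂(mulHaarR.prod (mulHaarR.prod mulHaarR)), p.1 ≠ 0 := by
    rw [ae_iff]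
    have h : {p : ℝ × ℝ × ℝ | ¬ p.1 ≠ 0} = ({0} : Set ℝ) ×ˢ (Set.univ : Set (ℝ × ℝ)) := by
      ext ⟨x, y, z⟩; simp [eq_comm]
    rw [h, Measure.prod_prod, mulHaarR_singleton_zero, zero_mul]
  have e2 : ∀ᵐ p : ℝ × ℝ × ℝ ∂(mulHaarR.prod (mulHaarR.prod mulHaarR)), p.2.1 ≠ 0 := by
    rw [ae_iff]
    have h : {p : ℝ × ℝ × ℝ | ¬ p.2.1 ≠ 0}
        = (Set.univ : Set ℝ) ×ˢ (({0} : Set ℝ) ×ˢ (Set.univ : Set ℝ)) := by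
      ext ⟨x, y, z⟩; simp [eq_comm]
    rw [h, Measure.prod_prod, Measure.prod_prod, mulHaarR_singleton_zero, zero_mul, mul_zero]
  have e3 : ∀ᵐ p : ℝ × ℝ × ℝ ∂(mulHaarR.prod (mulHaarR.prod mulHaarR)), p.2.2 ≠ 0 := by
    rw [ae_iff]
    have h : {p : ℝ × ℝ × ℝ | ¬ p.2.2 ≠ 0}
        = (Set.univ : Set ℝ) ×ˢ ((Set.univ : Set ℝ) ×ˢ ({0} : Set ℝ)) := by
      ext ⟨x, y, z⟩; simp [eq_comm]
    rw [h, Measure.prod_prod, Measure.prod_prod, mulHaarR_singleton_zero, mul_zero, mul_zero]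
  exact e1.and (e2.and e3)

lemma bf_eq (s₁ s₂ t₁ t₂ : ℂ) {a₁ a₂ c : ℝ} (h1 : a₁ ≠ 0) (h2 : a₂ ≠ 0) (h3 : c ≠ 0) :
    bfIntegrandR2 s₁ s₂ t₁ t₂ (a₁, a₂, c)
      = gker (s₁ + t₁) (c⁻¹ * a₁) *
        (gker (s₂ + t₁ + t₂) a₂ * gker (s₁ + t₂) (a₂⁻¹ * c)) := by
  have l1 : Real.log |c⁻¹ * a₁| = -Real.log |c| + Real.log |a₁| := by
    rw [abs_mul, abs_inv, Real.log_mul (by simpa using h3) (abs_ne_zero.mpr h1), Real.log_inv]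
  have l2 : Real.log |a₂⁻¹ * c| = -Real.log |a₂| + Real.log |c| := by
    rw [abs_mul, abs_inv, Real.log_mul (by simpa using h2) (abs_ne_zero.mpr h3), Real.log_inv]
  have hc : (c : ℂ) ≠ 0 := Complex.ofReal_ne_zero.mpr h3
  have ha2 : (a₂ : ℂ) ≠ 0 := Complex.ofReal_ne_zero.mpr h2
  simp only [bfIntegrandR2, gker, cpowR, l1, l2]
  push_cast
  simp only [← Complex.exp_add]
  congr 1
  field_simp
  ring

/-- For `Re(s₁ + t₁) > 0`, `Re(s₁ + t₂) > 0`, `Re(s₂ + t₁ + t₂) > 0`, the triple integral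
`∫∫∫ |a₁|^{s₁+t₁} |a₂|^{s₂-s₁+t₁} |c|^{t₂-t₁} e^{-π a₂² - π c²/a₂² - π a₁²/c²}
  d×c d×a₁ d×a₂` converges absolutely and equals `ζ_ℝ(s₁+t₁) ζ_ℝ(s₁+t₂) ζ_ℝ(s₂+t₁+t₂)`. -/
theorem stmt_7 (t₁ t₂ s₁ s₂ : ℂ) (h₁ : 0 < (s₁ + t₁).re) (h₂ : 0 < (s₁ + t₂).re)
    (h₃ : 0 < (s₂ + t₁ + t₂).re) :
    Integrable (bfIntegrandR2 s₁ s₂ t₁ t₂) (mulHaarR.prod (mulHaarR.prod mulHaarR)) ∧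
      ∫ p : ℝ × ℝ × ℝ, bfIntegrandR2 s₁ s₂ t₁ t₂ p
          ∂(mulHaarR.prod (mulHaarR.prod mulHaarR)) =
        zetaR (s₁ + t₁) * zetaR (s₁ + t₂) * zetaR (s₂ + t₁ + t₂) := by
  obtain ⟨iA, vA⟩ := gker_key (s₁ + t₁) h₁
  obtain ⟨iV, vV⟩ := gker_key (s₁ + t₂) h₂
  obtain ⟨iU, vU⟩ := gker_key (s₂ + t₁ + t₂) h₃
  set μ3 := mulHaarR.prod (mulHaarR.prod mulHaarR) with hμ3
  set F : ℝ × ℝ × ℝ → ℂ :=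
    fun q => gker (s₁ + t₁) q.1 * (gker (s₂ + t₁ + t₂) q.2.1 * gker (s₁ + t₂) q.2.2) with hF
  set Φ : ℝ × ℝ × ℝ → ℝ × ℝ × ℝ :=
    fun p => (p.2.2⁻¹ * p.1, (p.2.1, p.2.1⁻¹ * p.2.2)) with hΦdef
  have hΦ : MeasurePreserving Φ μ3 μ3 := measurePreserving_Phi
  have hFint : Integrable F μ3 := iA.mul_prod (iU.mul_prod iV)
  have hae : bfIntegrandR2 s₁ s₂ t₁ t₂ =ᵐ[μ3] F ∘ Φ := by
    filter_upwards [ae_triple] with p hp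
    obtain ⟨ha1, ha2, hc⟩ := hp
    exact bf_eq s₁ s₂ t₁ t₂ ha1 ha2 hc
  have hcomp : Integrable (F ∘ Φ) μ3 := by
    have h := integrable_map_measure (f := Φ) (g := F)
      (by rw [hΦ.map_eq]; exact hFint.aestronglyMeasurable) hΦ.measurable.aemeasurable
    rw [hΦ.map_eq] at h
    exact h.mp hFint
  have hbf : Integrable (bfIntegrandR2 s₁ s₂ t₁ t₂) μ3 := hcomp.congr hae.symm
  refine ⟨hbf, ?_⟩
  have e1 : ∫ p, bfIntegrandR2 s₁ s₂ t₁ t₂ p ∂μ3 = ∫ p, (F ∘ Φ) p ∂μ3 :=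
    integral_congr_ae hae
  have e2 : ∫ p, (F ∘ Φ) p ∂μ3 = ∫ q, F q ∂μ3 := by
    have h := integral_map (φ := Φ) hΦ.measurable.aemeasurable
      (f := F) (by rw [hΦ.map_eq]; exact hFint.aestronglyMeasurable)
    rw [hΦ.map_eq] at h
    exact h.symm
  have e3 : ∫ q, F q ∂μ3
      = (∫ x, gker (s₁ + t₁) x ∂mulHaarR) *
        ((∫ x, gker (s₂ + t₁ + t₂) x ∂mulHaarR) * (∫ x, gker (s₁ + t₂) x ∂mulHaarR)) := by
    rw [hμ3, hF]
    rw [integral_prod_mul (μ := mulHaarR) (ν := mulHaarR.prod mulHaarR)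
      (f := gker (s₁ + t₁))
      (g := fun r : ℝ × ℝ => gker (s₂ + t₁ + t₂) r.1 * gker (s₁ + t₂) r.2)]
    rw [integral_prod_mul]
  rw [e1, e2, e3, vA, vU, vV]
  have hz : ∀ s : ℂ, zetaR s = Complex.Gammaℝ s := fun _ => rfl
  rw [hz, hz, hz]
  ring
end

section
/- Let t, u, s₁, s₂ ∈ ℂ with Re(s₁ + u) > 0 and Re(s₂ + t + u) > 0. Then the double integral ∫_{ℝˣ}∫_{ℝˣ} |g₁|^{s₂−s₁+t} · |g₂|^{s₁+u} · exp(−π g₁² − π g₂²/g₁²) d×g₂ d×g₁ converges absolutely and equals ζ_ℝ(s₂ + t + u) · ζ_ℝ(s₁ + u). (This is the case n = 1, F = ℝ of the paper's theorem on the modified GL_n × GL_n Rankin–Selberg integral of Sakellaridis: for π = |·|^t and σ = |·|^u the integral ∫∫ W_π(g₁)W_σ(g₂)Φ*(g₁⁻¹g₂)Φ(g₁)|g₂/g₁|^{s₁}|g₁|^{s₂} d×g₂ d×g₁ with Gaussian test data equals L(s₂, π × σ)·L(s₁, σ); this result is new in the paper even in the unramified case.) -/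
open MeasureTheory

/-- The integrand of the `n = 1`, `F = ℝ` modified Rankin–Selberg integral of
Sakellaridis, in the variables `p = (g₁, g₂)`:
`|g₁|^{s₂-s₁+t} |g₂|^{s₁+u} exp(-π g₁² - π g₂²/g₁²)`. -/
noncomputable def sakIntegrandR1 (s₁ s₂ t u : ℂ) (p : ℝ × ℝ) : ℂ :=
  cpowR p.1 (s₂ - s₁ + t) * cpowR p.2 (s₁ + u) *
    (Real.exp (-Real.pi * p.1 ^ 2 - Real.pi * (p.2 ^ 2 / p.1 ^ 2)) : ℂ)

section SakAux
open Set Complex Real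

lemma cpow_pos_eq {x : ℝ} (hx : 0 < x) (w : ℂ) :
    (x : ℂ) ^ w = Complex.exp (w * (Real.log x : ℂ)) := by
  rw [Complex.cpow_def_of_ne_zero (Complex.ofReal_ne_zero.mpr hx.ne'),
    ← Complex.ofReal_log hx.le, mul_comm]

lemma gauss_integrableOn {s : ℂ} (hs : 0 < s.re) {b : ℝ} (hb : 0 < b) :
    IntegrableOn (fun t : ℝ => (t : ℂ) ^ (s - 1) * (Real.exp (-b * t ^ 2) : ℂ)) (Set.Ioi 0) := by
  have hmaj := integrableOn_rpow_mul_exp_neg_mul_sq hb (s := s.re - 1) (by linarith)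
  refine Integrable.mono' hmaj ?_ ?_
  · refine ContinuousOn.aestronglyMeasurable (fun x hx => ?_) measurableSet_Ioi
    have hx0 : (0:ℝ) < x := hx
    exact ((Complex.continuousAt_ofReal_cpow_const x (s-1) (Or.inr hx0.ne')).mul
      ((Complex.continuous_ofReal.comp (Real.continuous_exp.comp
        (by continuity))).continuousAt)).continuousWithinAt
  · refine (ae_restrict_iff' measurableSet_Ioi).mpr (ae_of_all _ fun x hx => ?_)
    have hx0 : (0:ℝ) < x := hx
    rw [norm_mul, Complex.norm_cpow_eq_rpow_re_of_pos hx0,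
      Complex.norm_real, Real.norm_eq_abs, abs_of_pos (Real.exp_pos _), sub_re, one_re]

lemma gauss_integral {s : ℂ} (hs : 0 < s.re) {b : ℝ} (hb : 0 < b) :
    ∫ t in Set.Ioi (0:ℝ), (t : ℂ) ^ (s - 1) * (Real.exp (-b * t ^ 2) : ℂ)
      = Complex.exp (-(s / 2) * (Real.log b : ℂ)) * Complex.Gamma (s / 2) / 2 := by
  have hre : 0 < (s / 2).re := by
    rw [show (2:ℂ) = ((2:ℝ):ℂ) by norm_num, Complex.div_ofReal_re]; linarith
  have key := integral_comp_rpow_Ioi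
    (fun y : ℝ => (y : ℂ) ^ (s / 2 - 1) * (Real.exp (-b * y) : ℂ)) (p := 2) two_ne_zero
  have hrhs : ∫ y in Set.Ioi (0:ℝ), (y : ℂ) ^ (s / 2 - 1) * (Real.exp (-b * y) : ℂ)
      = Complex.exp (-(s / 2) * (Real.log b : ℂ)) * Complex.Gamma (s / 2) := by
    have h0 := integral_cpow_mul_exp_neg_mul_Ioi hre hb
    rw [show ∫ y in Set.Ioi (0:ℝ), (y : ℂ) ^ (s / 2 - 1) * (Real.exp (-b * y) : ℂ)
        = ∫ y in Set.Ioi (0:ℝ), (y : ℂ) ^ (s / 2 - 1) * Complex.exp (-((b:ℂ) * (y:ℂ)))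
        from by congr 1 with y; push_cast; ring_nf, h0]
    congr 1
    rw [show (1 / (b:ℂ)) = (((b⁻¹ : ℝ)) : ℂ) by push_cast; ring,
      cpow_pos_eq (inv_pos.mpr hb), Real.log_inv]
    push_cast; ring_nf
  have hlhs : ∫ x in Set.Ioi (0:ℝ), (|(2:ℝ)| * x ^ ((2:ℝ) - 1)) •
      ((((x ^ (2:ℝ) : ℝ)) : ℂ) ^ (s / 2 - 1) * (Real.exp (-b * x ^ (2:ℝ)) : ℂ))
      = 2 * ∫ t in Set.Ioi (0:ℝ), (t : ℂ) ^ (s - 1) * (Real.exp (-b * t ^ 2) : ℂ) := by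
    rw [← integral_const_mul]
    refine setIntegral_congr_fun measurableSet_Ioi fun x hx => ?_
    have hx0 : (0:ℝ) < x := hx
    have h2 : x ^ (2:ℝ) = x ^ 2 := by
      rw [show (2:ℝ) = ((2:ℕ):ℝ) by norm_num, Real.rpow_natCast]
    have hx2 : (0:ℝ) < x ^ 2 := by positivity
    rw [h2, cpow_pos_eq hx2, cpow_pos_eq hx0, show |(2:ℝ)| * x ^ ((2:ℝ)-1) = 2 * x by
      rw [show (2:ℝ) - 1 = 1 by norm_num, Real.rpow_one]; simp [abs_of_nonneg],
      Complex.real_smul]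
    have hxe : (x : ℂ) = Complex.exp ((Real.log x : ℂ)) := by
      rw [← Complex.ofReal_exp, Real.exp_log hx0]
    have hlog : Real.log (x ^ 2) = 2 * Real.log x := by
      rw [show x ^ 2 = |x| ^ 2 from (_root_.sq_abs x).symm, Real.log_pow, Real.log_abs]
      push_cast; ring
    rw [hlog, Complex.ofReal_mul 2 (Real.log x), Complex.ofReal_mul 2 x,
      Complex.ofReal_ofNat]
    have hme : Complex.exp ((Real.log x : ℂ)) *
        Complex.exp ((s/2-1) * ((2:ℂ) * (Real.log x : ℂ)))
        = Complex.exp ((s-1) * (Real.log x : ℂ)) := by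
      rw [← Complex.exp_add]; congr 1; ring
    calc (2:ℂ) * (x:ℂ) * (Complex.exp ((s/2-1) * ((2:ℂ) * (Real.log x : ℂ))) *
          (Real.exp (-b * x^2) : ℂ))
        = 2 * ((Complex.exp ((Real.log x : ℂ)) *
            Complex.exp ((s/2-1) * ((2:ℂ) * (Real.log x : ℂ)))) *
            (Real.exp (-b * x^2) : ℂ)) := by rw [hxe]; ring
      _ = 2 * (Complex.exp ((s-1) * (Real.log x : ℂ)) * (Real.exp (-b * x^2) : ℂ)) := by
          rw [hme]
  rw [hlhs, hrhs] at key
  rw [eq_div_iff (two_ne_zero' ℂ)]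
  rw [← key]; ring

lemma integrable_comp_abs' {f : ℝ → ℂ} (hf : IntegrableOn f (Set.Ioi 0)) :
    Integrable fun x => f |x| := by
  have eqIoi : IntegrableOn (fun x => f |x|) (Set.Ioi 0) :=
    hf.congr_fun (fun x hx => by rw [abs_of_pos hx]) measurableSet_Ioi
  have int_Iic : IntegrableOn (fun x => f |x|) (Set.Iic 0) := by
    rw [← Measure.map_neg_eq_self (volume : Measure ℝ)]
    have m : MeasurableEmbedding fun x : ℝ => -x :=
      (Homeomorph.neg ℝ).measurableEmbedding
    rw [m.integrableOn_map_iff]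
    simp_rw [Function.comp_def, abs_neg, Set.neg_preimage, Set.neg_Iic, neg_zero]
    exact Iff.mpr integrableOn_Ici_iff_integrableOn_Ioi eqIoi
  have h := int_Iic.union eqIoi
  rwa [Set.Iic_union_Ioi, integrableOn_univ] at h

lemma integral_comp_abs' (f : ℝ → ℂ) :
    ∫ x : ℝ, f |x| = 2 * ∫ x in Set.Ioi (0:ℝ), f x := by
  have eq : ∫ x in Set.Ioi (0:ℝ), f |x| = ∫ x in Set.Ioi (0:ℝ), f x :=
    setIntegral_congr_fun measurableSet_Ioi fun x hx => by rw [abs_of_pos hx]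
  by_cases hf : IntegrableOn (fun x => f |x|) (Set.Ioi 0)
  · have int_Iic : IntegrableOn (fun x => f |x|) (Set.Iic 0) := by
      rw [← Measure.map_neg_eq_self (volume : Measure ℝ)]
      have m : MeasurableEmbedding fun x : ℝ => -x :=
        (Homeomorph.neg ℝ).measurableEmbedding
      rw [m.integrableOn_map_iff]
      simp_rw [Function.comp_def, abs_neg, Set.neg_preimage, Set.neg_Iic, neg_zero]
      exact Iff.mpr integrableOn_Ici_iff_integrableOn_Ioi hf
    calc ∫ x : ℝ, f |x|
        = (∫ x in Set.Iic 0, f |x|) + ∫ x in Set.Ioi 0, f |x| := by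
          rw [← setIntegral_union (Set.Iic_disjoint_Ioi le_rfl) measurableSet_Ioi int_Iic hf,
            Set.Iic_union_Ioi, Measure.restrict_univ]
      _ = 2 * ∫ x in Set.Ioi 0, f x := by
          rw [two_mul, eq]
          congr! 1
          rw [← neg_zero, ← integral_comp_neg_Iic, neg_zero]
          refine setIntegral_congr_fun measurableSet_Iic fun x hx => ?_
          rw [abs_eq_neg_self.mpr (by exact hx)]
  · have h2 : ¬Integrable (fun x => f |x|) (volume : Measure ℝ) := fun h => hf h.integrableOn
    rw [← eq, integral_undef h2, integral_undef hf, mul_zero]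

lemma mulHaarR_eq :
    mulHaarR = volume.withDensity fun x => (((|x|⁻¹ : ℝ).toNNReal) : ENNReal) := by
  rw [mulHaarR]; congr 1 with x; rw [one_div]; rfl

lemma dens_meas : Measurable fun x : ℝ => (|x|⁻¹ : ℝ).toNNReal :=
  ((_root_.continuous_abs : Continuous fun x : ℝ => |x|).measurable.inv).real_toNNReal

lemma haar_int {s : ℂ} (hs : 0 < s.re) {b : ℝ} (hb : 0 < b) :
    Integrable (fun x : ℝ =>
      Complex.exp (s * (Real.log |x| : ℂ)) * (Real.exp (-b * x ^ 2) : ℂ)) mulHaarR ∧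
    ∫ x : ℝ, Complex.exp (s * (Real.log |x| : ℂ)) * (Real.exp (-b * x ^ 2) : ℂ) ∂mulHaarR
      = Complex.exp (-(s / 2) * (Real.log b : ℂ)) * Complex.Gamma (s / 2) := by
  set g : ℝ → ℂ := fun x =>
    Complex.exp (s * (Real.log |x| : ℂ)) * (Real.exp (-b * x ^ 2) : ℂ) with hg
  set f : ℝ → ℂ := fun r =>
    (|r|⁻¹ : ℝ) • (Complex.exp (s * (Real.log |r| : ℂ)) * (Real.exp (-b * r ^ 2) : ℂ)) with hfd
  have hfg : ∀ x, (((|x|⁻¹ : ℝ).toNNReal : ℝ)) • g x = f |x| := by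
    intro x
    rw [hfd, hg]
    simp only [_root_.abs_abs, _root_.sq_abs]
    rw [Real.coe_toNNReal _ (by positivity)]
  have hIoi : Set.EqOn f (fun t : ℝ => (t : ℂ) ^ (s - 1) * (Real.exp (-b * t ^ 2) : ℂ))
      (Set.Ioi 0) := by
    intro x hx
    have hx0 : (0:ℝ) < x := hx
    have hxe : (x : ℂ) = Complex.exp ((Real.log x : ℂ)) := by
      rw [← Complex.ofReal_exp, Real.exp_log hx0]
    rw [hfd]
    simp only [abs_of_pos hx0]
    rw [Complex.real_smul, Complex.ofReal_inv, cpow_pos_eq hx0, hxe, ← Complex.exp_neg,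
      ← mul_assoc, ← Complex.exp_add]
    congr 2
    ring
  have hInt0 : IntegrableOn f (Set.Ioi 0) :=
    (gauss_integrableOn hs hb).congr_fun hIoi.symm measurableSet_Ioi
  have hcomp : Integrable (fun x => f |x|) := integrable_comp_abs' hInt0
  constructor
  · rw [mulHaarR_eq, integrable_withDensity_iff_integrable_smul₀ dens_meas.aemeasurable]
    exact hcomp.congr (ae_of_all _ fun x => (hfg x).symm)
  · rw [mulHaarR_eq, integral_withDensity_eq_integral_smul₀ dens_meas.aemeasurable]
    calc ∫ x, (((|x|⁻¹ : ℝ).toNNReal : ℝ)) • g x = ∫ x, f |x| := by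
          exact integral_congr_ae (ae_of_all _ hfg)
      _ = 2 * ∫ x in Set.Ioi (0:ℝ), f x := integral_comp_abs' f
      _ = 2 * ∫ t in Set.Ioi (0:ℝ), (t : ℂ) ^ (s - 1) * (Real.exp (-b * t ^ 2) : ℂ) := by
          rw [setIntegral_congr_fun measurableSet_Ioi hIoi]
      _ = Complex.exp (-(s / 2) * (Real.log b : ℂ)) * Complex.Gamma (s / 2) := by
          rw [gauss_integral hs hb]; ring

lemma norm_aux (s : ℂ) (b x : ℝ) :
    ‖Complex.exp (s * (Real.log |x| : ℂ)) * (Real.exp (-b * x ^ 2) : ℂ)‖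
      = Real.exp (s.re * Real.log |x|) * Real.exp (-b * x ^ 2) := by
  rw [norm_mul, Complex.norm_exp, Complex.norm_real, Real.norm_eq_abs,
    abs_of_pos (Real.exp_pos _)]
  congr 2
  simp [Complex.mul_re]

lemma haar_norm_int {s : ℂ} (hs : 0 < s.re) {b : ℝ} (hb : 0 < b) :
    ∫ x : ℝ, ‖Complex.exp (s * (Real.log |x| : ℂ)) * (Real.exp (-b * x ^ 2) : ℂ)‖ ∂mulHaarR
      = Real.exp (-(s.re / 2) * Real.log b) * Real.Gamma (s.re / 2) := by
  have h2 := (haar_int (s := ((s.re : ℂ))) (by simpa using hs) hb).2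
  have hfun : ∀ x : ℝ, Complex.exp ((s.re : ℂ) * (Real.log |x| : ℂ)) * (Real.exp (-b * x ^ 2) : ℂ)
      = ((Real.exp (s.re * Real.log |x|) * Real.exp (-b * x ^ 2) : ℝ) : ℂ) := by
    intro x
    rw [← Complex.ofReal_mul s.re, ← Complex.ofReal_exp, ← Complex.ofReal_mul]
  simp_rw [hfun] at h2
  rw [show ∫ x : ℝ, ((Real.exp (s.re * Real.log |x|) * Real.exp (-b * x ^ 2) : ℝ) : ℂ) ∂mulHaarR
      = ((∫ x : ℝ, Real.exp (s.re * Real.log |x|) * Real.exp (-b * x ^ 2) ∂mulHaarR : ℝ) : ℂ)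
    from integral_ofReal] at h2
  have hrhs : Complex.exp (-((s.re : ℂ) / 2) * (Real.log b : ℂ)) * Complex.Gamma ((s.re : ℂ) / 2)
      = ((Real.exp (-(s.re / 2) * Real.log b) * Real.Gamma (s.re / 2) : ℝ) : ℂ) := by
    rw [show -((s.re : ℂ) / 2) * (Real.log b : ℂ) = ((-(s.re / 2) * Real.log b : ℝ) : ℂ) by
        push_cast; ring,
      ← Complex.ofReal_exp,
      show ((s.re : ℂ) / 2) = ((s.re / 2 : ℝ) : ℂ) by push_cast; ring,
      Complex.Gamma_ofReal, ← Complex.ofReal_mul]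
  rw [hrhs] at h2
  have := Complex.ofReal_injective h2
  rw [← this]
  exact integral_congr_ae (ae_of_all _ fun x => norm_aux s b x)

lemma zetaR_exp_eq (s : ℂ) :
    zetaR s = Complex.exp (-(s / 2) * (Real.log Real.pi : ℂ)) * Complex.Gamma (s / 2) := by
  rw [zetaR, cpow_pos_eq Real.pi_pos, neg_div]

instance : SFinite mulHaarR := by unfold mulHaarR; infer_instance

end SakAux

/-- For `Re(s₁ + u) > 0` and `Re(s₂ + t + u) > 0`, the double integral
`∫∫ |g₁|^{s₂-s₁+t} |g₂|^{s₁+u} e^{-π g₁² - π g₂²/g₁²} d×g₂ d×g₁` converges absolutely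
and equals `ζ_ℝ(s₂+t+u) ζ_ℝ(s₁+u)`. -/
theorem stmt_10 (t u s₁ s₂ : ℂ) (h₁ : 0 < (s₁ + u).re) (h₂ : 0 < (s₂ + t + u).re) :
    Integrable (sakIntegrandR1 s₁ s₂ t u) (mulHaarR.prod mulHaarR) ∧
      ∫ p : ℝ × ℝ, sakIntegrandR1 s₁ s₂ t u p ∂(mulHaarR.prod mulHaarR) =
        zetaR (s₂ + t + u) * zetaR (s₁ + u) := by
  classical
  set w := s₁ + u with hw
  set τ := s₂ + t + u with hτdef
  set ρ := s₂ - s₁ + t with hρ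
  have hτ : τ = ρ + w := by rw [hτdef, hρ, hw]; ring
  have hsplit : ∀ p : ℝ × ℝ, sakIntegrandR1 s₁ s₂ t u p
      = (Complex.exp (ρ * (Real.log |p.1| : ℂ)) * (Real.exp (-Real.pi * p.1 ^ 2) : ℂ)) *
        (Complex.exp (w * (Real.log |p.2| : ℂ)) *
          (Real.exp (-(Real.pi / p.1 ^ 2) * p.2 ^ 2) : ℂ)) := by
    intro p
    unfold sakIntegrandR1 cpowR
    rw [show -Real.pi * p.1 ^ 2 - Real.pi * (p.2 ^ 2 / p.1 ^ 2)
        = -Real.pi * p.1 ^ 2 + -(Real.pi / p.1 ^ 2) * p.2 ^ 2 by ring, Real.exp_add,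
      Complex.ofReal_mul]
    ring
  have hm : Measurable (sakIntegrandR1 s₁ s₂ t u) := by
    unfold sakIntegrandR1 cpowR
    have hL : Measurable fun x : ℝ => (Real.log |x| : ℂ) :=
      Complex.measurable_ofReal.comp (Real.measurable_log.comp _root_.continuous_abs.measurable)
    have hm1 : Measurable fun p : ℝ × ℝ => Complex.exp ((s₂ - s₁ + t) * (Real.log |p.1| : ℂ)) :=
      Complex.measurable_exp.comp (measurable_const.mul (hL.comp measurable_fst))
    have hm2 : Measurable fun p : ℝ × ℝ => Complex.exp ((s₁ + u) * (Real.log |p.2| : ℂ)) :=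
      Complex.measurable_exp.comp (measurable_const.mul (hL.comp measurable_snd))
    have hm3 : Measurable fun p : ℝ × ℝ =>
        (Real.exp (-Real.pi * p.1 ^ 2 - Real.pi * (p.2 ^ 2 / p.1 ^ 2)) : ℂ) :=
      Complex.measurable_ofReal.comp (Real.measurable_exp.comp
        ((measurable_const.mul (measurable_fst.pow_const 2)).sub
          (measurable_const.mul ((measurable_snd.pow_const 2).div
            (measurable_fst.pow_const 2)))))
    exact (hm1.mul hm2).mul hm3
  have hvol : ∀ᵐ x : ℝ ∂(volume : Measure ℝ), x ≠ 0 := by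
    rw [MeasureTheory.ae_iff]
    simp only [not_not, Set.setOf_eq_eq_singleton]
    exact measure_singleton 0
  have hae : ∀ᵐ x : ℝ ∂mulHaarR, x ≠ 0 :=
    hvol.filter_mono (MeasureTheory.withDensity_absolutelyContinuous volume _).ae_le
  have hinner : ∀ᵐ g₁ : ℝ ∂mulHaarR,
      Integrable (fun g₂ => sakIntegrandR1 s₁ s₂ t u (g₁, g₂)) mulHaarR := by
    filter_upwards [hae] with g₁ hg₁
    have hb : 0 < Real.pi / g₁ ^ 2 := div_pos Real.pi_pos (by positivity)
    have := ((haar_int h₁ hb).1).const_mul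
      (Complex.exp (ρ * (Real.log |g₁| : ℂ)) * (Real.exp (-Real.pi * g₁ ^ 2) : ℂ))
    exact this.congr (Filter.Eventually.of_forall fun g₂ => (hsplit (g₁, g₂)).symm)
  have houter : Integrable
      (fun g₁ => ∫ g₂, ‖sakIntegrandR1 s₁ s₂ t u (g₁, g₂)‖ ∂mulHaarR) mulHaarR := by
    have hbase := (((haar_int h₂ Real.pi_pos).1).norm.const_mul
      (Real.exp (-(w.re / 2) * Real.log Real.pi) * Real.Gamma (w.re / 2)))
    refine hbase.congr ?_
    filter_upwards [hae] with g₁ hg₁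
    have hb : 0 < Real.pi / g₁ ^ 2 := div_pos Real.pi_pos (by positivity)
    have hlog2 : Real.log (Real.pi / g₁ ^ 2) = Real.log Real.pi - 2 * Real.log |g₁| := by
      rw [Real.log_div Real.pi_ne_zero (by positivity),
        show g₁ ^ 2 = |g₁| ^ 2 from (_root_.sq_abs g₁).symm, Real.log_pow]
      push_cast; ring
    have hτre : τ.re = ρ.re + w.re := by rw [hτ, Complex.add_re]
    simp_rw [hsplit]
    rw [show (fun g₂ : ℝ => ‖Complex.exp (ρ * (Real.log |g₁| : ℂ)) *
          (Real.exp (-Real.pi * g₁ ^ 2) : ℂ) *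
          (Complex.exp (w * (Real.log |g₂| : ℂ)) *
            (Real.exp (-(Real.pi / g₁ ^ 2) * g₂ ^ 2) : ℂ))‖)
        = fun g₂ : ℝ => ‖Complex.exp (ρ * (Real.log |g₁| : ℂ)) *
          (Real.exp (-Real.pi * g₁ ^ 2) : ℂ)‖ *
          ‖Complex.exp (w * (Real.log |g₂| : ℂ)) *
            (Real.exp (-(Real.pi / g₁ ^ 2) * g₂ ^ 2) : ℂ)‖
        from funext fun _ => norm_mul _ _,
      integral_const_mul, haar_norm_int h₁ hb, norm_aux, norm_aux, hlog2, hτre, add_mul,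
      Real.exp_add,
      show -(w.re / 2) * (Real.log Real.pi - 2 * Real.log |g₁|)
        = -(w.re / 2) * Real.log Real.pi + w.re * Real.log |g₁| by ring, Real.exp_add]
    ring
  have hInt : Integrable (sakIntegrandR1 s₁ s₂ t u) (mulHaarR.prod mulHaarR) :=
    (integrable_prod_iff hm.aestronglyMeasurable).2 ⟨hinner, houter⟩
  refine ⟨hInt, ?_⟩
  rw [MeasureTheory.integral_prod _ hInt]
  have hval : (fun g₁ : ℝ => ∫ g₂, sakIntegrandR1 s₁ s₂ t u (g₁, g₂) ∂mulHaarR)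
      =ᵐ[mulHaarR] fun g₁ =>
        (Complex.exp (-(w / 2) * (Real.log Real.pi : ℂ)) * Complex.Gamma (w / 2)) *
        (Complex.exp (τ * (Real.log |g₁| : ℂ)) * (Real.exp (-Real.pi * g₁ ^ 2) : ℂ)) := by
    filter_upwards [hae] with g₁ hg₁
    have hb : 0 < Real.pi / g₁ ^ 2 := div_pos Real.pi_pos (by positivity)
    have hlog2 : Real.log (Real.pi / g₁ ^ 2) = Real.log Real.pi - 2 * Real.log |g₁| := by
      rw [Real.log_div Real.pi_ne_zero (by positivity),
        show g₁ ^ 2 = |g₁| ^ 2 from (_root_.sq_abs g₁).symm, Real.log_pow]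
      push_cast; ring
    simp_rw [hsplit]
    rw [integral_const_mul, (haar_int h₁ hb).2, hlog2,
      show -(w / 2) * ((Real.log Real.pi - 2 * Real.log |g₁| : ℝ) : ℂ)
        = -(w / 2) * (Real.log Real.pi : ℂ) + w * (Real.log |g₁| : ℂ) by push_cast; ring,
      show Complex.exp (-(w / 2) * (Real.log Real.pi : ℂ) + w * (Real.log |g₁| : ℂ))
          = Complex.exp (-(w / 2) * (Real.log Real.pi : ℂ)) *
            Complex.exp (w * (Real.log |g₁| : ℂ)) from Complex.exp_add _ _,
      show Complex.exp (τ * (Real.log |g₁| : ℂ))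
          = Complex.exp (ρ * (Real.log |g₁| : ℂ)) * Complex.exp (w * (Real.log |g₁| : ℂ)) by
        rw [← Complex.exp_add]; congr 1; rw [hτ]; ring,
      show ∀ E G a b c : ℂ, Complex.exp a * E * (Complex.exp c * Complex.exp b * G)
          = Complex.exp c * G * (Complex.exp a * Complex.exp b * E) from
        fun E G a b c => by ring]
  rw [integral_congr_ae hval, integral_const_mul, (haar_int h₂ Real.pi_pos).2,
    zetaR_exp_eq, zetaR_exp_eq]
  ring
end
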